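/- arXiv:1703.07965 — 3 statements merged into one kernel-verified Lean document; each statement's English description precedes it below -/
import Mathlib

section
/- Let $p \geq 2$ and define $\alpha_j^p = \frac{\prod_{\ell=0}^{j}(\ell^2 - p^2)}{(2j+2)!}$ for $1 \leq j \leq p-1$. Then these constants satisfy the recursion: $\alpha_1^2 = 1/2$, $\alpha_1^3 = 3$, $\alpha_2^3 = -1/2$, and for $m \geq 3$: $\alpha_1^{m+1} = \frac{m^2}{2} + 2\alpha_1^m - \alpha_1^{m-1}$, $\alpha_j^{m+1} = 2\alpha_j^m - \alpha_j^{m-1} - \alpha_{j-1}^m$ for $j = 2, \ldots, m-2$, $\alpha_{m-1}^{m+1} = 2\alpha_{m-1}^m - \alpha_{m-2}^m$, and $\alpha_m^{m+1} = -\alpha_{m-1}^m$. -/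
/-- The coefficients of the leap-frog based local time-stepping scheme,
`α_j^p = (∏_{ℓ=0}^{j} (ℓ² - p²)) / (2j+2)!`. -/
noncomputable def alphaLTS (p j : ℕ) : ℝ :=
  (∏ l ∈ Finset.range (j + 1), ((l : ℝ) ^ 2 - (p : ℝ) ^ 2)) / (Nat.factorial (2 * j + 2))

noncomputable def gP (j : ℕ) (x : ℝ) : ℝ := ∏ l ∈ Finset.range (j + 1), ((l : ℝ) ^ 2 - x ^ 2)

noncomputable def hP (j : ℕ) (x : ℝ) : ℝ :=
  ∏ l ∈ Finset.range j, (((l : ℝ) + 1) ^ 2 - x ^ 2)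

lemma gP_succ (j : ℕ) (x : ℝ) : gP (j + 1) x = gP j x * (((j : ℝ) + 1) ^ 2 - x ^ 2) := by
  rw [gP, Finset.prod_range_succ]
  push_cast
  rfl

lemma hP_succ (j : ℕ) (x : ℝ) : hP (j + 1) x = hP j x * (((j : ℝ) + 1) ^ 2 - x ^ 2) :=
  Finset.prod_range_succ _ _

lemma gP_eq_hP (j : ℕ) (x : ℝ) : gP j x = -x ^ 2 * hP j x := by
  rw [gP, Finset.prod_range_succ']
  rw [hP]
  push_cast
  ring

lemma key (i : ℕ) (x : ℝ) :
    (gP (i + 1) (x + 1) - 2 * gP (i + 1) x + gP (i + 1) (x - 1)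
      = (2 * (i : ℝ) + 3) * (2 * (i : ℝ) + 4) * x ^ 2 * hP i x)
    ∧ (gP (i + 1) (x + 1) - gP (i + 1) (x - 1)
      = x * hP i x * (2 * (2 * (i : ℝ) + 4) * x ^ 2 + 2 * ((i : ℝ) + 1) * ((i : ℝ) + 2))) := by
  induction i generalizing x with
  | zero =>
    unfold gP hP
    simp only [Finset.prod_range_succ, Finset.prod_range_zero, Nat.cast_zero, Nat.cast_one,
      one_mul, Nat.cast_ofNat]
    constructor <;> ring
  | succ i ih =>
    obtain ⟨hA, hB⟩ := ih x
    have hb : gP (i + 1) x = -x ^ 2 * (hP i x * (((i : ℝ) + 1) ^ 2 - x ^ 2)) := by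
      rw [gP_eq_hP, hP_succ]
    rw [gP_succ (i + 1), gP_succ (i + 1), gP_succ (i + 1), hP_succ]
    push_cast
    constructor
    · linear_combination (((i : ℝ) + 2) ^ 2 - x ^ 2 - 1) * hA - 2 * x * hB - 2 * hb
    · linear_combination (((i : ℝ) + 2) ^ 2 - x ^ 2 - 1) * hB - 2 * x * hA - 4 * x * hb

lemma alpha_def (p j : ℕ) :
    alphaLTS p j = gP j (p : ℝ) / (Nat.factorial (2 * j + 2) : ℝ) := rfl

lemma alpha_zero (p j : ℕ) (h : p ≤ j) : alphaLTS p j = 0 := by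
  rw [alphaLTS]
  rw [Finset.prod_eq_zero (Finset.mem_range.mpr (by omega : p < j + 1)) (by ring), zero_div]

lemma alpha_j0 (p : ℕ) : alphaLTS p 0 = -(p : ℝ) ^ 2 / 2 := by
  rw [alphaLTS]
  norm_num [Finset.prod_range_one, Nat.factorial]

lemma alpha_master (i q : ℕ) :
    alphaLTS (q + 2) (i + 1)
      = 2 * alphaLTS (q + 1) (i + 1) - alphaLTS q (i + 1) - alphaLTS (q + 1) i := by
  have h := (key i ((q : ℝ) + 1)).1
  have hg : gP i ((q : ℝ) + 1) = -((q : ℝ) + 1) ^ 2 * hP i ((q : ℝ) + 1) := gP_eq_hP i _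
  have hnum : gP (i + 1) ((q : ℝ) + 2)
      = 2 * gP (i + 1) ((q : ℝ) + 1) - gP (i + 1) (q : ℝ)
        - (2 * (i : ℝ) + 3) * (2 * (i : ℝ) + 4) * gP i ((q : ℝ) + 1) := by
    have e1 : ((q : ℝ) + 1) + 1 = (q : ℝ) + 2 := by ring
    have e2 : ((q : ℝ) + 1) - 1 = (q : ℝ) := by ring
    rw [e1, e2] at h
    linear_combination h + (2 * (i : ℝ) + 3) * (2 * (i : ℝ) + 4) * hg
  have hfac : (Nat.factorial (2 * (i + 1) + 2) : ℝ)
      = (Nat.factorial (2 * i + 2) : ℝ) * ((2 * (i : ℝ) + 3) * (2 * (i : ℝ) + 4)) := by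
    have e : 2 * (i + 1) + 2 = (2 * i + 2 + 1) + 1 := by omega
    rw [e, Nat.factorial_succ, Nat.factorial_succ]
    push_cast
    ring
  have hF : (Nat.factorial (2 * i + 2) : ℝ) ≠ 0 := by
    exact_mod_cast Nat.factorial_ne_zero _
  rw [alpha_def, alpha_def, alpha_def, alpha_def]
  have c1 : ((q + 2 : ℕ) : ℝ) = (q : ℝ) + 2 := by push_cast; ring
  have c2 : ((q + 1 : ℕ) : ℝ) = (q : ℝ) + 1 := by push_cast; ring
  rw [c1, c2, hnum, hfac]
  field_simp

theorem alphaLTS_recursion :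
    alphaLTS 2 1 = 1 / 2 ∧ alphaLTS 3 1 = 3 ∧ alphaLTS 3 2 = -(1 / 2) ∧
    ∀ m : ℕ, 3 ≤ m →
      (alphaLTS (m + 1) 1 = (m : ℝ) ^ 2 / 2 + 2 * alphaLTS m 1 - alphaLTS (m - 1) 1) ∧
      (∀ j : ℕ, 2 ≤ j → j ≤ m - 2 →
        alphaLTS (m + 1) j =
          2 * alphaLTS m j - alphaLTS (m - 1) j - alphaLTS m (j - 1)) ∧
      (alphaLTS (m + 1) (m - 1) = 2 * alphaLTS m (m - 1) - alphaLTS m (m - 2)) ∧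
      (alphaLTS (m + 1) m = -alphaLTS m (m - 1)) := by
  refine ⟨?_, ?_, ?_, ?_⟩
  · rw [alphaLTS]; norm_num [Finset.prod_range_succ, Nat.factorial]
  · rw [alphaLTS]; norm_num [Finset.prod_range_succ, Nat.factorial]
  · rw [alphaLTS]; norm_num [Finset.prod_range_succ, Nat.factorial]
  · intro m hm
    obtain ⟨n, rfl⟩ : ∃ n, m = n + 3 := ⟨m - 3, by omega⟩
    have e1 : n + 3 - 1 = n + 2 := by omega
    have e2 : n + 3 - 2 = n + 1 := by omega
    rw [e1, e2]
    refine ⟨?_, ?_, ?_, ?_⟩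
    · have h := alpha_master 0 (n + 2)
      have e : n + 2 + 2 = n + 3 + 1 := by omega
      have e' : n + 2 + 1 = n + 3 := by omega
      rw [e, e'] at h
      rw [h, alpha_j0]
      push_cast
      ring
    · intro j hj2 _
      obtain ⟨i, rfl⟩ : ∃ i, j = i + 2 := ⟨j - 2, by omega⟩
      have ej : i + 2 - 1 = i + 1 := by omega
      rw [ej]
      have h := alpha_master (i + 1) (n + 2)
      have e : n + 2 + 2 = n + 3 + 1 := by omega
      have e' : n + 2 + 1 = n + 3 := by omega
      have e'' : i + 1 + 1 = i + 2 := by omega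
      rw [e, e', e''] at h
      exact h
    · have h := alpha_master (n + 1) (n + 2)
      have e : n + 2 + 2 = n + 3 + 1 := by omega
      have e' : n + 2 + 1 = n + 3 := by omega
      have e'' : n + 1 + 1 = n + 2 := by omega
      rw [e, e', e''] at h
      rw [h, alpha_zero (n + 2) (n + 2) le_rfl]
      ring
    · have h := alpha_master (n + 2) (n + 2)
      have e : n + 2 + 2 = n + 3 + 1 := by omega
      have e' : n + 2 + 1 = n + 3 := by omega
      have e'' : n + 2 + 1 = n + 3 := by omega
      rw [e, e'] at h
      rw [show n + 2 + 1 = n + 3 from by omega] at h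
      rw [h, alpha_zero (n + 3) (n + 3) le_rfl, alpha_zero (n + 2) (n + 3) (by omega)]
      ring
end

section
/- For every integer $p \geq 0$ and every integer $m \geq 0$, the supremum of $|T_p^{(m)}(x)|$ over $x \in [-1,1]$ equals $T_p^{(m)}(1)$, where $T_p$ is the Chebyshev polynomial of the first kind of degree $p$. -/
open Polynomial Polynomial.Chebyshev Finset

def IsNNTCombo (q : Polynomial ℝ) : Prop :=
  ∃ (N : ℕ) (c : ℕ → ℝ), (∀ k, 0 ≤ c k) ∧
    q = ∑ k ∈ Finset.range N, Polynomial.C (c k) * Polynomial.Chebyshev.T ℝ (k : ℤ)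

lemma nnt_extend {N M : ℕ} (hNM : N ≤ M) (c : ℕ → ℝ) :
    ∑ k ∈ range N, C (c k) * T ℝ (k : ℤ)
      = ∑ k ∈ range M, C (if k < N then c k else 0) * T ℝ (k : ℤ) := by
  rw [← Finset.sum_subset (Finset.range_subset_range.2 hNM)]
  · exact Finset.sum_congr rfl fun k hk => by simp [Finset.mem_range.1 hk]
  · intro k _ hk
    rw [Finset.mem_range, not_lt] at hk
    simp [if_neg (by omega : ¬ k < N)]

lemma nnt_zero : IsNNTCombo 0 := ⟨0, fun _ => 0, fun _ => le_rfl, by simp⟩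

lemma nnt_T (k : ℕ) : IsNNTCombo (T ℝ (k : ℤ)) := by
  refine ⟨k + 1, fun j => if j = k then 1 else 0, fun j => by positivity, ?_⟩
  rw [Finset.sum_eq_single k]
  · simp
  · intro b _ hb; simp [hb]
  · intro h; exact absurd (Finset.self_mem_range_succ k) h

lemma nnt_add {q r : Polynomial ℝ} (hq : IsNNTCombo q) (hr : IsNNTCombo r) :
    IsNNTCombo (q + r) := by
  obtain ⟨N, c, hc, rfl⟩ := hq
  obtain ⟨M, d, hd, rfl⟩ := hr
  refine ⟨max N M, fun k => (if k < N then c k else 0) + (if k < M then d k else 0),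
    fun k => by have := hc k; have := hd k; positivity, ?_⟩
  rw [nnt_extend (le_max_left N M) c, nnt_extend (le_max_right N M) d,
    ← Finset.sum_add_distrib]
  exact Finset.sum_congr rfl fun k _ => by rw [C_add, add_mul]

lemma nnt_smul {q : Polynomial ℝ} (a : ℝ) (ha : 0 ≤ a) (hq : IsNNTCombo q) :
    IsNNTCombo (Polynomial.C a * q) := by
  obtain ⟨N, c, hc, rfl⟩ := hq
  refine ⟨N, fun k => a * c k, fun k => mul_nonneg ha (hc k), ?_⟩
  rw [Finset.mul_sum]
  exact Finset.sum_congr rfl fun k _ => by rw [← mul_assoc, ← Polynomial.C_mul]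

lemma U_add_two_eq (n : ℤ) : U ℝ (n + 2) = 2 * T ℝ (n + 2) + U ℝ n := by
  have h1 := U_eq ℝ (n + 2)
  have h2 := T_eq_U_sub_X_mul_U ℝ (n + 2)
  simp only [show (n : ℤ) + 2 - 1 = n + 1 by ring, show (n : ℤ) + 2 - 2 = n by ring] at h1 h2
  linear_combination -h1 - 2 * h2

lemma nnt_U (n : ℕ) : IsNNTCombo (U ℝ (n : ℤ)) := by
  induction n using Nat.strong_induction_on with
  | _ n ih =>
    match n with
    | 0 => simpa [Polynomial.Chebyshev.U_zero, Polynomial.Chebyshev.T_zero] using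
        (by simpa using nnt_T 0 : IsNNTCombo (T ℝ 0))
    | 1 =>
      have h : U ℝ ((1 : ℕ) : ℤ) = C 2 * T ℝ (1 : ℤ) := by
        rw [Nat.cast_one]
        simp [Polynomial.Chebyshev.U_one, Polynomial.Chebyshev.T_one, map_ofNat]
      rw [h]
      exact nnt_smul 2 (by norm_num) (by simpa using nnt_T 1)
    | (n + 2) =>
      have h : ((n : ℤ) + 2) = ((n + 2 : ℕ) : ℤ) := by push_cast; ring
      have := U_add_two_eq (n : ℤ)
      rw [h] at this
      rw [this]
      have h2 : (2 : Polynomial ℝ) * T ℝ ((n + 2 : ℕ) : ℤ) = C 2 * T ℝ ((n + 2 : ℕ) : ℤ) := by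
        rw [map_ofNat]
      rw [h2]
      exact nnt_add (nnt_smul 2 (by norm_num) (nnt_T (n + 2))) (ih n (by omega))

lemma nnt_derivative_T (k : ℕ) : IsNNTCombo (derivative (T ℝ (k : ℤ))) := by
  match k with
  | 0 => simpa using nnt_zero
  | (j + 1) =>
    rw [T_derivative_eq_U]
    have h : (((j + 1 : ℕ) : ℤ) : Polynomial ℝ) = C ((j : ℝ) + 1) := by push_cast; simp
    have h2 : ((j + 1 : ℕ) : ℤ) - 1 = ((j : ℕ) : ℤ) := by push_cast; ring
    rw [h, h2]
    exact nnt_smul _ (by positivity) (nnt_U j)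

lemma nnt_derivative {q : Polynomial ℝ} (hq : IsNNTCombo q) : IsNNTCombo (derivative q) := by
  obtain ⟨N, c, hc, rfl⟩ := hq
  rw [derivative_sum]
  induction (Finset.range N) using Finset.induction_on with
  | empty => simpa using nnt_zero
  | insert _ _ hx ih =>
    rw [Finset.sum_insert hx]
    refine nnt_add ?_ ih
    rw [derivative_C_mul]
    exact nnt_smul _ (hc _) (nnt_derivative_T _)

lemma T_eval_one' (n : ℤ) : (T ℝ n).eval 1 = 1 := by
  have := T_real_cos 0 n
  simpa using this

lemma T_abs_eval_le (n : ℤ) {x : ℝ} (hx : x ∈ Set.Icc (-1 : ℝ) 1) :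
    |(T ℝ n).eval x| ≤ 1 := by
  obtain ⟨h1, h2⟩ := hx
  have hc : Real.cos (Real.arccos x) = x := Real.cos_arccos h1 h2
  have := T_real_cos (Real.arccos x) n
  rw [hc] at this
  rw [this]
  exact Real.abs_cos_le_one _

lemma nnt_bound {q : Polynomial ℝ} (hq : IsNNTCombo q) {x : ℝ}
    (hx : x ∈ Set.Icc (-1 : ℝ) 1) : |q.eval x| ≤ q.eval 1 := by
  obtain ⟨N, c, hc, rfl⟩ := hq
  simp only [Polynomial.eval_finset_sum, Polynomial.eval_mul, Polynomial.eval_C]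
  calc |∑ k ∈ range N, c k * (T ℝ (k : ℤ)).eval x|
      ≤ ∑ k ∈ range N, |c k * (T ℝ (k : ℤ)).eval x| := Finset.abs_sum_le_sum_abs _ _
    _ ≤ ∑ k ∈ range N, c k * (T ℝ (k : ℤ)).eval 1 := by
        apply Finset.sum_le_sum
        intro k _
        rw [abs_mul, abs_of_nonneg (hc k), T_eval_one' (k : ℤ), mul_one]
        calc c k * |(T ℝ (k : ℤ)).eval x| ≤ c k * 1 :=
              mul_le_mul_of_nonneg_left (T_abs_eval_le _ hx) (hc k)
          _ = c k := mul_one _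

theorem chebyshev_iterated_deriv_max_at_one (p m : ℕ) :
    IsGreatest
      ((fun x : ℝ =>
          |(Polynomial.derivative^[m] (Polynomial.Chebyshev.T ℝ (p : ℤ))).eval x|) ''
        Set.Icc (-1 : ℝ) 1)
      ((Polynomial.derivative^[m] (Polynomial.Chebyshev.T ℝ (p : ℤ))).eval 1) := by
  have hgood : IsNNTCombo (Polynomial.derivative^[m] (T ℝ (p : ℤ))) := by
    induction m with
    | zero => simpa using nnt_T p
    | succ m ih => rw [Function.iterate_succ_apply']; exact nnt_derivative ih
  have hnonneg : 0 ≤ (Polynomial.derivative^[m] (T ℝ (p : ℤ))).eval 1 :=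
    le_trans (abs_nonneg _) (nnt_bound hgood (by norm_num : (1:ℝ) ∈ Set.Icc (-1:ℝ) 1))
  constructor
  · exact ⟨1, by norm_num, by simp [abs_of_nonneg hnonneg]⟩
  · rintro y ⟨x, hx, rfl⟩
    exact nnt_bound hgood hx
end

section
/- Let $S$ be a finite-dimensional real inner product space, $A : S \to S$ a self-adjoint positive definite operator with orthonormal eigenbasis $(\eta_k)_{k=1}^M$ and eigenvalues $\lambda_k > 0$ satisfying $\lambda_k (\Delta t)^2 < 4$ for all $k$, where $\Delta t > 0$. Define the iteration $\begin{pmatrix} v^{(n+1/2)} \\ u^{(n+1)} \end{pmatrix} = \begin{pmatrix} I & -\Delta t A \\ \Delta t I & I - (\Delta t)^2 A \end{pmatrix} \begin{pmatrix} v^{(n-1/2)} \\ u^{(n)} \end{pmatrix}$. Then there exists a constant $C_0$, depending only on the quantity $\max_k \lambda_k (\Delta t)^2$, such that $\|v^{(n+1/2)}\| + \|u^{(n)}\| \leq C_0 (\|v^{(1/2)}\| + \|u^{(1)}\|)$ for all $n \geq 1$, with $C_0$ independent of $n$. -/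
open scoped RealInnerProductSpace

theorem leapfrog_stability
    {E : Type*} [NormedAddCommGroup E] [InnerProductSpace ℝ E] [FiniteDimensional ℝ E]
    (M : ℕ) (A : E →ₗ[ℝ] E) (η : OrthonormalBasis (Fin M) ℝ E) (lam : Fin M → ℝ)
    (heig : ∀ k : Fin M, A (η k) = lam k • η k)
    (hpos : ∀ k : Fin M, 0 < lam k)
    (dt : ℝ) (hdt : 0 < dt) (hCFL : ∀ k : Fin M, lam k * dt ^ 2 < 4)
    (v u : ℕ → E)
    (hrec : ∀ n : ℕ, v (n + 1) = v n - dt • A (u n) ∧ u (n + 1) = u n + dt • v (n + 1)) :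
    ∃ C0 : ℝ, 0 < C0 ∧ ∀ n : ℕ, ‖v n‖ + ‖u n‖ ≤ C0 * (‖v 0‖ + ‖u 0‖) := by
  classical
  -- action of A in coordinates
  have hA : ∀ (w : E) (k : Fin M), ⟪η k, A w⟫ = lam k * ⟪η k, w⟫ := by
    intro w k
    have hw : A w = ∑ i, (⟪η i, w⟫ * lam i) • η i := by
      conv_lhs => rw [← η.sum_repr' w]
      rw [map_sum]
      refine Finset.sum_congr rfl fun i _ => ?_
      rw [map_smul, heig, smul_smul]
    rw [hw, inner_sum]
    rw [Finset.sum_eq_single k]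
    · rw [real_inner_smul_right, real_inner_self_eq_norm_sq, η.orthonormal.1 k]
      ring
    · intro i _ hik
      rw [real_inner_smul_right, η.orthonormal.2 hik.symm]
      ring
    · intro h; exact absurd (Finset.mem_univ k) h
  set X : Fin M → ℕ → ℝ := fun k n => ⟪η k, v n⟫ with hX
  set Y : Fin M → ℕ → ℝ := fun k n => ⟪η k, u n⟫ with hY
  have hx : ∀ (k : Fin M) (n : ℕ), X k (n + 1) = X k n - dt * (lam k * Y k n) := by
    intro k n
    simp only [hX, hY, (hrec n).1, inner_sub_right, real_inner_smul_right, hA]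
  have hy : ∀ (k : Fin M) (n : ℕ), Y k (n + 1) = Y k n + dt * X k (n + 1) := by
    intro k n
    simp only [hX, hY, (hrec n).2, inner_add_right, real_inner_smul_right]
  -- conserved modal energy
  have hcons : ∀ (k : Fin M) (n : ℕ),
      X k n ^ 2 - dt * lam k * X k n * Y k n + lam k * Y k n ^ 2
        = X k 0 ^ 2 - dt * lam k * X k 0 * Y k 0 + lam k * Y k 0 ^ 2 := by
    intro k n
    induction n with
    | zero => rfl
    | succ n ih =>
      rw [hy k n, hx k n, ← ih]
      ring
  -- per-mode bound
  have key : ∀ k : Fin M, ∃ Kk : ℝ, 0 ≤ Kk ∧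
      ∀ n, X k n ^ 2 + Y k n ^ 2 ≤ Kk * (X k 0 ^ 2 + Y k 0 ^ 2) := by
    intro k
    set s : ℝ := Real.sqrt (lam k) with hs
    have hs0 : 0 ≤ s := Real.sqrt_nonneg _
    have hs2 : s ^ 2 = lam k := Real.sq_sqrt (hpos k).le
    have hds : dt * s < 2 := by
      nlinarith [hCFL k, mul_nonneg hdt.le hs0]
    have hm : 0 < min 1 (lam k) := lt_min one_pos (hpos k)
    have hc : 0 < (1 - dt * s / 2) * min 1 (lam k) := by
      have : 0 < 1 - dt * s / 2 := by linarith
      positivity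
    have hnum : 0 ≤ 1 + lam k + dt * lam k / 2 := by nlinarith [hpos k, hdt]
    refine ⟨(1 + lam k + dt * lam k / 2) / ((1 - dt * s / 2) * min 1 (lam k)),
      div_nonneg hnum hc.le, fun n => ?_⟩
    have hlow : (1 - dt * s / 2) * min 1 (lam k) * (X k n ^ 2 + Y k n ^ 2)
        ≤ X k n ^ 2 - dt * lam k * X k n * Y k n + lam k * Y k n ^ 2 := by
      have h1 : (1 - dt * s / 2) * (X k n ^ 2 + lam k * Y k n ^ 2)
          ≤ X k n ^ 2 - dt * lam k * X k n * Y k n + lam k * Y k n ^ 2 := by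
        rw [← hs2]
        nlinarith [mul_nonneg (mul_nonneg hdt.le hs0) (sq_nonneg (X k n - s * Y k n))]
      have h2 : min 1 (lam k) * (X k n ^ 2 + Y k n ^ 2)
          ≤ X k n ^ 2 + lam k * Y k n ^ 2 := by
        nlinarith [mul_le_mul_of_nonneg_right (min_le_left 1 (lam k)) (sq_nonneg (X k n)),
          mul_le_mul_of_nonneg_right (min_le_right 1 (lam k)) (sq_nonneg (Y k n))]
      calc (1 - dt * s / 2) * min 1 (lam k) * (X k n ^ 2 + Y k n ^ 2)
          = (1 - dt * s / 2) * (min 1 (lam k) * (X k n ^ 2 + Y k n ^ 2)) := by ring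
        _ ≤ (1 - dt * s / 2) * (X k n ^ 2 + lam k * Y k n ^ 2) := by
            apply mul_le_mul_of_nonneg_left h2 (by linarith)
        _ ≤ _ := h1
    have hup : X k 0 ^ 2 - dt * lam k * X k 0 * Y k 0 + lam k * Y k 0 ^ 2
        ≤ (1 + lam k + dt * lam k / 2) * (X k 0 ^ 2 + Y k 0 ^ 2) := by
      nlinarith [mul_nonneg (mul_nonneg hdt.le (hpos k).le) (sq_nonneg (X k 0 + Y k 0)),
        mul_nonneg (hpos k).le (sq_nonneg (X k 0)), sq_nonneg (Y k 0)]
    rw [div_mul_eq_mul_div, le_div_iff₀ hc]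
    calc (X k n ^ 2 + Y k n ^ 2) * ((1 - dt * s / 2) * min 1 (lam k))
        = (1 - dt * s / 2) * min 1 (lam k) * (X k n ^ 2 + Y k n ^ 2) := by ring
      _ ≤ X k n ^ 2 - dt * lam k * X k n * Y k n + lam k * Y k n ^ 2 := hlow
      _ = X k 0 ^ 2 - dt * lam k * X k 0 * Y k 0 + lam k * Y k 0 ^ 2 := hcons k n
      _ ≤ (1 + lam k + dt * lam k / 2) * (X k 0 ^ 2 + Y k 0 ^ 2) := hup
  choose K hK0 hK using key
  set C1 : ℝ := 1 + ∑ k, K k with hC1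
  have hC1pos : 0 < C1 := by
    have : 0 ≤ ∑ k, K k := Finset.sum_nonneg fun k _ => hK0 k
    simp only [hC1]; linarith
  have hKle : ∀ k : Fin M, K k ≤ C1 := by
    intro k
    have := Finset.single_le_sum (fun i (_ : i ∈ Finset.univ) => hK0 i) (Finset.mem_univ k)
    simp only [hC1]; linarith
  -- Parseval
  have hnorm : ∀ w : E, ‖w‖ ^ 2 = ∑ k, ⟪η k, w⟫ ^ 2 := by
    intro w
    have := η.sum_inner_mul_inner w w
    rw [real_inner_self_eq_norm_sq] at this
    rw [← this]
    refine Finset.sum_congr rfl fun k _ => ?_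
    rw [real_inner_comm w (η k)]; ring
  have hsum : ∀ n : ℕ, ‖v n‖ ^ 2 + ‖u n‖ ^ 2 ≤ C1 * (‖v 0‖ ^ 2 + ‖u 0‖ ^ 2) := by
    intro n
    have h1 : ‖v n‖ ^ 2 + ‖u n‖ ^ 2 = ∑ k, (X k n ^ 2 + Y k n ^ 2) := by
      rw [hnorm, hnorm, ← Finset.sum_add_distrib]
    have h0 : ‖v 0‖ ^ 2 + ‖u 0‖ ^ 2 = ∑ k, (X k 0 ^ 2 + Y k 0 ^ 2) := by
      rw [hnorm, hnorm, ← Finset.sum_add_distrib]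
    rw [h1, h0, Finset.mul_sum]
    refine Finset.sum_le_sum fun k _ => ?_
    calc X k n ^ 2 + Y k n ^ 2 ≤ K k * (X k 0 ^ 2 + Y k 0 ^ 2) := hK k n
      _ ≤ C1 * (X k 0 ^ 2 + Y k 0 ^ 2) := by
          apply mul_le_mul_of_nonneg_right (hKle k) (by positivity)
  refine ⟨Real.sqrt (2 * C1), Real.sqrt_pos.mpr (by linarith), fun n => ?_⟩
  have hvn : 0 ≤ ‖v n‖ + ‖u n‖ := by positivity
  have hv0 : 0 ≤ ‖v 0‖ + ‖u 0‖ := by positivity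
  have hsq : (‖v n‖ + ‖u n‖) ^ 2 ≤ 2 * C1 * (‖v 0‖ + ‖u 0‖) ^ 2 := by
    have h2 : (‖v n‖ + ‖u n‖) ^ 2 ≤ 2 * (‖v n‖ ^ 2 + ‖u n‖ ^ 2) := by
      nlinarith [sq_nonneg (‖v n‖ - ‖u n‖)]
    have h3 : ‖v 0‖ ^ 2 + ‖u 0‖ ^ 2 ≤ (‖v 0‖ + ‖u 0‖) ^ 2 := by
      nlinarith [mul_nonneg (norm_nonneg (v 0)) (norm_nonneg (u 0))]
    nlinarith [hsum n]
  calc ‖v n‖ + ‖u n‖ = Real.sqrt ((‖v n‖ + ‖u n‖) ^ 2) := (Real.sqrt_sq hvn).symm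
    _ ≤ Real.sqrt (2 * C1 * (‖v 0‖ + ‖u 0‖) ^ 2) := Real.sqrt_le_sqrt hsq
    _ = Real.sqrt (2 * C1) * (‖v 0‖ + ‖u 0‖) := by
        rw [Real.sqrt_mul (by linarith), Real.sqrt_sq hv0]
end
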